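/- (Proposition B.1′, early-period identification from two cohorts.) Suppose two cohorts a ∈ {1, 2}, each on its own probability space, satisfy Assumption 4 with parameter k and the same sequence μ_t; write covᵃ and Varᵃ for the covariance and variance in cohort a and wᵃ_t := μ_t·θᵃ_t + εᵃ_t. Fix integers t and t' with t' ≥ t + k, and assume Var¹(θ_{t−1}) ≠ Var²(θ_{t−1}), Var¹(θ_t − θ_{t−1}) = Var²(θ_t − θ_{t−1}), μ_{t−1} ≠ 0, and μ_{t'} ≠ 0. Then cov¹(w_{t−1}, w_{t'}) − cov²(w_{t−1}, w_{t'}) ≠ 0 and ( cov¹(w_t, w_{t'}) − cov²(w_t, w_{t'}) ) / ( cov¹(w_{t−1}, w_{t'}) − cov²(w_{t−1}, w_{t'}) ) = μ_t / μ_{t−1}. -/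

import Mathlib

open MeasureTheory ProbabilityTheory

/-- Covariance of two real-valued random variables under measure `P`. -/
noncomputable def cov {Ω : Type*} [MeasurableSpace Ω] (P : Measure Ω) (X Y : Ω → ℝ) : ℝ :=
  ∫ ω, (X ω - ∫ a, X a ∂P) * (Y ω - ∫ a, Y a ∂P) ∂P

/-- Variance of a real-valued random variable under measure `P`. -/
noncomputable def Var {Ω : Type*} [MeasurableSpace Ω] (P : Measure Ω) (X : Ω → ℝ) : ℝ :=
  cov P X X

section Aux

set_option linter.unusedSectionVars false

variable {Ω : Type*} [MeasurableSpace Ω] {P : Measure Ω} [IsProbabilityMeasure P]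

lemma integrable_mul_of_memL2 {X Y : Ω → ℝ} (hX : MemLp X 2 P) (hY : MemLp Y 2 P) :
    Integrable (fun ω => X ω * Y ω) P := by
  have h1 := (hX.add hY).integrable_sq
  have h2 := hX.integrable_sq
  have h3 := hY.integrable_sq
  have : (fun ω => X ω * Y ω)
      = fun ω => (((X + Y) ω) ^ 2 - X ω ^ 2 - Y ω ^ 2) * (1/2) := by
    funext ω; simp [Pi.add_apply]; ring
  rw [this]
  exact ((h1.sub h2).sub h3).mul_const _

lemma memL2_center {X : Ω → ℝ} (hX : MemLp X 2 P) :
    MemLp (fun ω => X ω - ∫ a, X a ∂P) 2 P :=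
  hX.sub (memLp_const _)

lemma cov_comm {X Y : Ω → ℝ} : cov P X Y = cov P Y X := by
  unfold cov; congr 1; funext ω; ring

lemma cov_add_left {X Y Z : Ω → ℝ} (hX : MemLp X 2 P) (hY : MemLp Y 2 P)
    (hZ : MemLp Z 2 P) :
    cov P (fun ω => X ω + Y ω) Z = cov P X Z + cov P Y Z := by
  unfold cov
  have hint : ∫ a, (X a + Y a) ∂P = (∫ a, X a ∂P) + ∫ a, Y a ∂P :=
    integral_add (hX.integrable one_le_two) (hY.integrable one_le_two)
  rw [hint, ← integral_add (integrable_mul_of_memL2 (memL2_center hX) (memL2_center hZ))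
      (integrable_mul_of_memL2 (memL2_center hY) (memL2_center hZ))]
  congr 1; funext ω; ring

lemma cov_smul_left {X Z : Ω → ℝ} (c : ℝ) :
    cov P (fun ω => c * X ω) Z = c * cov P X Z := by
  unfold cov
  rw [← integral_const_mul]
  congr 1; funext ω
  simp only [integral_const_mul]
  ring

lemma cov_sub_left {X Y Z : Ω → ℝ} (hX : MemLp X 2 P) (hY : MemLp Y 2 P)
    (hZ : MemLp Z 2 P) :
    cov P (fun ω => X ω - Y ω) Z = cov P X Z - cov P Y Z := by
  have h : cov P (fun ω => (X ω - Y ω) + Y ω) Z = cov P (fun ω => X ω - Y ω) Z + cov P Y Z :=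
    cov_add_left (hX.sub hY) hY hZ
  simp only [sub_add_cancel] at h
  linarith


lemma cov_fun_congr_left {X X' Z : Ω → ℝ} (h : ∀ ω, X ω = X' ω) :
    cov P X Z = cov P X' Z := by
  have : X = X' := funext h
  rw [this]

lemma cov_theta_telescope (θ : ℤ → Ω → ℝ) (hθ : ∀ t, MemLp (θ t) 2 P)
    (A4i : ∀ t t' : ℤ, 1 ≤ t - t' → cov P (fun ω => θ t ω - θ (t - 1) ω) (θ t') = 0)
    (s u : ℤ) (hsu : s ≤ u) : cov P (θ u) (θ s) = Var P (θ s) := by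
  obtain ⟨n, rfl⟩ : ∃ n : ℕ, u = s + n := ⟨(u - s).toNat, by omega⟩
  clear hsu
  induction n with
  | zero => simp [Var]
  | succ n ih =>
      have e1 : (s + ((n : ℤ) + 1)) - 1 = s + n := by ring
      have h0 : cov P (fun ω => θ (s + (n + 1)) ω - θ (s + n) ω) (θ s) = 0 := by
        have := A4i (s + ((n : ℤ) + 1)) s (by omega)
        rw [e1] at this
        simpa using this
      have h1 : cov P (fun ω => θ (s + (n + 1)) ω - θ (s + n) ω) (θ s)
          = cov P (θ (s + (n + 1))) (θ s) - cov P (θ (s + n)) (θ s) :=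
        cov_sub_left (hθ _) (hθ _) (hθ s)
      have : cov P (θ (s + ((n : ℤ) + 1))) (θ s) = cov P (θ (s + n)) (θ s) := by
        have := h1.symm.trans h0
        push_cast at this ⊢
        linarith
      push_cast
      rw [this, ih]

lemma var_theta_decomp (θ : ℤ → Ω → ℝ) (hθ : ∀ t, MemLp (θ t) 2 P)
    (A4i : ∀ t t' : ℤ, 1 ≤ t - t' → cov P (fun ω => θ t ω - θ (t - 1) ω) (θ t') = 0)
    (t : ℤ) :
    Var P (θ t) = Var P (fun ω => θ t ω - θ (t - 1) ω) + Var P (θ (t - 1)) := by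
  have hΔ : MemLp (fun ω => θ t ω - θ (t - 1) ω) 2 P := (hθ t).sub (hθ (t - 1))
  have hrw : ∀ Z : Ω → ℝ, MemLp Z 2 P → cov P (θ t) Z
      = cov P (fun ω => θ t ω - θ (t - 1) ω) Z + cov P (θ (t - 1)) Z := by
    intro Z hZ
    have := cov_add_left (P := P) hΔ (hθ (t - 1)) hZ
    rw [← this]
    exact cov_fun_congr_left (fun ω => by ring)
  have h1 : Var P (θ t)
      = cov P (fun ω => θ t ω - θ (t - 1) ω) (θ t) + cov P (θ (t - 1)) (θ t) :=
    hrw (θ t) (hθ t)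
  have h2 : cov P (fun ω => θ t ω - θ (t - 1) ω) (θ t)
      = Var P (fun ω => θ t ω - θ (t - 1) ω)
        + cov P (θ (t - 1)) (fun ω => θ t ω - θ (t - 1) ω) := by
    rw [cov_comm]; exact hrw _ hΔ
  have h3 : cov P (θ (t - 1)) (fun ω => θ t ω - θ (t - 1) ω) = 0 := by
    rw [cov_comm]; exact A4i t (t - 1) (by omega)
  have h4 : cov P (θ (t - 1)) (θ t) = Var P (θ (t - 1)) := by
    rw [cov_comm]
    exact cov_theta_telescope θ hθ A4i (t - 1) t (by omega)
  rw [h1, h2, h3, h4]; ring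

lemma cov_w_eq (μ : ℤ → ℝ) (k : ℕ)
    (θ ε : ℤ → Ω → ℝ) (w : ℤ → Ω → ℝ)
    (hθ : ∀ t, MemLp (θ t) 2 P) (hε : ∀ t, MemLp (ε t) 2 P)
    (hw : ∀ t ω, w t ω = μ t * θ t ω + ε t ω)
    (A4i : ∀ t t' : ℤ, 1 ≤ t - t' → cov P (fun ω => θ t ω - θ (t - 1) ω) (θ t') = 0)
    (A4ii : ∀ t t' : ℤ, cov P (θ t) (ε t') = 0)
    (A4iii : ∀ t t' : ℤ, (k : ℤ) ≤ |t - t'| → cov P (ε t) (ε t') = 0)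
    (s u : ℤ) (hsu : s ≤ u) (hku : (k : ℤ) ≤ u - s) :
    cov P (w s) (w u) = μ s * μ u * Var P (θ s) := by
  have hws : MemLp (w s) 2 P := by
    have : w s = fun ω => μ s * θ s ω + ε s ω := funext (hw s)
    rw [this]; exact ((hθ s).const_mul _).add (hε s)
  have expand : ∀ (v : ℤ) (Z : Ω → ℝ), MemLp Z 2 P →
      cov P (w v) Z = μ v * cov P (θ v) Z + cov P (ε v) Z := by
    intro v Z hZ
    have h1 : cov P (w v) Z
        = cov P (fun ω => μ v * θ v ω + ε v ω) Z :=
      cov_fun_congr_left (fun ω => hw v ω)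
    rw [h1, cov_add_left ((hθ v).const_mul _) (hε v) hZ, cov_smul_left]
  have hεθ : ∀ v v' : ℤ, cov P (ε v) (θ v') = 0 := fun v v' => by
    rw [cov_comm]; exact A4ii v' v
  have h1 := expand s (w u) ((by
    have : w u = fun ω => μ u * θ u ω + ε u ω := funext (hw u)
    rw [this]; exact ((hθ u).const_mul _).add (hε u)))
  have h2 : cov P (θ s) (w u) = μ u * Var P (θ s) := by
    rw [cov_comm]
    rw [expand u (θ s) (hθ s)]
    rw [cov_theta_telescope θ hθ A4i s u hsu, hεθ]
    ring
  have h3 : cov P (ε s) (w u) = 0 := by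
    rw [cov_comm]
    rw [expand u (ε s) (hε s)]
    rw [A4ii, A4iii u s (by rw [abs_of_nonneg] <;> omega)]
    ring
  rw [h1, h2, h3]; ring

end Aux

/-- Proposition B.1′ (early-period identification from two cohorts): if two cohorts satisfy
Assumption 4 with the same returns `μ`, the period-`(t−1)` skill variances differ across
cohorts, and the skill-growth variances agree, then the across-cohort difference of long
autocovariances identifies `μ t / μ (t−1)`. -/
theorem two_cohort_early_identification
    {Ω₁ Ω₂ : Type*} [MeasurableSpace Ω₁] [MeasurableSpace Ω₂]
    (P₁ : Measure Ω₁) (P₂ : Measure Ω₂)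
    [IsProbabilityMeasure P₁] [IsProbabilityMeasure P₂]
    (μ : ℤ → ℝ) (k : ℕ) (hk : 1 ≤ k)
    (θ₁ ε₁ : ℤ → Ω₁ → ℝ) (w₁ : ℤ → Ω₁ → ℝ)
    (θ₂ ε₂ : ℤ → Ω₂ → ℝ) (w₂ : ℤ → Ω₂ → ℝ)
    (hθ₁ : ∀ t, MemLp (θ₁ t) 2 P₁) (hε₁ : ∀ t, MemLp (ε₁ t) 2 P₁)
    (hθ₂ : ∀ t, MemLp (θ₂ t) 2 P₂) (hε₂ : ∀ t, MemLp (ε₂ t) 2 P₂)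
    (hw₁ : ∀ t ω, w₁ t ω = μ t * θ₁ t ω + ε₁ t ω)
    (hw₂ : ∀ t ω, w₂ t ω = μ t * θ₂ t ω + ε₂ t ω)
    (A4i₁ : ∀ t t' : ℤ, 1 ≤ t - t' →
      cov P₁ (fun ω => θ₁ t ω - θ₁ (t - 1) ω) (θ₁ t') = 0)
    (A4ii₁ : ∀ t t' : ℤ, cov P₁ (θ₁ t) (ε₁ t') = 0)
    (A4iii₁ : ∀ t t' : ℤ, (k : ℤ) ≤ |t - t'| → cov P₁ (ε₁ t) (ε₁ t') = 0)
    (A4i₂ : ∀ t t' : ℤ, 1 ≤ t - t' →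
      cov P₂ (fun ω => θ₂ t ω - θ₂ (t - 1) ω) (θ₂ t') = 0)
    (A4ii₂ : ∀ t t' : ℤ, cov P₂ (θ₂ t) (ε₂ t') = 0)
    (A4iii₂ : ∀ t t' : ℤ, (k : ℤ) ≤ |t - t'| → cov P₂ (ε₂ t) (ε₂ t') = 0)
    (t t' : ℤ) (ht : t + k ≤ t')
    (hvar_ne : Var P₁ (θ₁ (t - 1)) ≠ Var P₂ (θ₂ (t - 1)))
    (hvar_eq : Var P₁ (fun ω => θ₁ t ω - θ₁ (t - 1) ω) =
      Var P₂ (fun ω => θ₂ t ω - θ₂ (t - 1) ω))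
    (hμ₁ : μ (t - 1) ≠ 0) (hμ₂ : μ t' ≠ 0) :
    cov P₁ (w₁ (t - 1)) (w₁ t') - cov P₂ (w₂ (t - 1)) (w₂ t') ≠ 0 ∧
      (cov P₁ (w₁ t) (w₁ t') - cov P₂ (w₂ t) (w₂ t')) /
          (cov P₁ (w₁ (t - 1)) (w₁ t') - cov P₂ (w₂ (t - 1)) (w₂ t')) =
        μ t / μ (t - 1) := by
  have e11 : cov P₁ (w₁ (t - 1)) (w₁ t') = μ (t - 1) * μ t' * Var P₁ (θ₁ (t - 1)) :=
    cov_w_eq μ k θ₁ ε₁ w₁ hθ₁ hε₁ hw₁ A4i₁ A4ii₁ A4iii₁ (t - 1) t' (by omega) (by omega)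
  have e12 : cov P₁ (w₁ t) (w₁ t') = μ t * μ t' * Var P₁ (θ₁ t) :=
    cov_w_eq μ k θ₁ ε₁ w₁ hθ₁ hε₁ hw₁ A4i₁ A4ii₁ A4iii₁ t t' (by omega) (by omega)
  have e21 : cov P₂ (w₂ (t - 1)) (w₂ t') = μ (t - 1) * μ t' * Var P₂ (θ₂ (t - 1)) :=
    cov_w_eq μ k θ₂ ε₂ w₂ hθ₂ hε₂ hw₂ A4i₂ A4ii₂ A4iii₂ (t - 1) t' (by omega) (by omega)
  have e22 : cov P₂ (w₂ t) (w₂ t') = μ t * μ t' * Var P₂ (θ₂ t) :=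
    cov_w_eq μ k θ₂ ε₂ w₂ hθ₂ hε₂ hw₂ A4i₂ A4ii₂ A4iii₂ t t' (by omega) (by omega)
  have d1 := var_theta_decomp θ₁ hθ₁ A4i₁ t
  have d2 := var_theta_decomp θ₂ hθ₂ A4i₂ t
  set V₁ := Var P₁ (θ₁ (t - 1))
  set V₂ := Var P₂ (θ₂ (t - 1))
  have hd : V₁ - V₂ ≠ 0 := sub_ne_zero.mpr hvar_ne
  have hD1 : cov P₁ (w₁ (t - 1)) (w₁ t') - cov P₂ (w₂ (t - 1)) (w₂ t')
      = μ (t - 1) * μ t' * (V₁ - V₂) := by rw [e11, e21]; ring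
  have hD2 : cov P₁ (w₁ t) (w₁ t') - cov P₂ (w₂ t) (w₂ t')
      = μ t * μ t' * (V₁ - V₂) := by rw [e12, e22, d1, d2, hvar_eq]; ring
  constructor
  · rw [hD1]
    exact mul_ne_zero (mul_ne_zero hμ₁ hμ₂) hd
  · rw [hD1, hD2]
    field_simp
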